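/- Suppose that the map (h, θ) ↦ f_h(θ) is continuous in h for P-almost all θ ∈ Θ, that the function θ ↦ sup_{h∈H} |f_h(θ)| is measurable, and that ∫ sup_{h∈H} |f_h| dP < ∞. Then sup_{h∈H} |B_n(h) − B(h)| → 0 almost surely as n → ∞. -/

import Mathlib

open MeasureTheory ProbabilityTheory Filter Topology Set Metric

set_option linter.unusedSectionVars false
set_option maxHeartbeats 1000000

noncomputable def wAux {E Θ' : Type*} (f : E → Θ' → ℝ) (F : Θ' → ℝ) (D : Set E) (θ : Θ') : ℝ :=
  ⨆ p : D × D, min |f p.1 θ - f p.2 θ| (2 * F θ)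

section wprops
variable {E Θ' : Type*} [MeasurableSpace Θ'] {f : E → Θ' → ℝ} {F : Θ' → ℝ} {D : Set E}

lemma wAux_bddAbove (θ : Θ') :
    BddAbove (Set.range fun p : D × D => min |f p.1 θ - f p.2 θ| (2 * F θ)) := by
  refine ⟨2 * F θ, ?_⟩
  rintro - ⟨p, rfl⟩
  exact min_le_right _ _

lemma wAux_nonneg {θ : Θ'} (hF : 0 ≤ F θ) : 0 ≤ wAux f F D θ :=
  Real.iSup_nonneg fun p => le_min (abs_nonneg _) (by linarith)

lemma wAux_le [Nonempty D] (θ : Θ') : wAux f F D θ ≤ 2 * F θ :=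
  ciSup_le fun p => min_le_right _ _

lemma wAux_term_le {θ : Θ'} {x y : E} (hx : x ∈ D) (hy : y ∈ D)
    (hb : |f x θ - f y θ| ≤ 2 * F θ) : |f x θ - f y θ| ≤ wAux f F D θ := by
  have h := le_ciSup (wAux_bddAbove (f := f) (F := F) θ) (⟨⟨x, hx⟩, ⟨y, hy⟩⟩ : D × D)
  rwa [min_eq_left hb] at h

lemma wAux_measurable (hD : D.Countable) (hf : ∀ x ∈ D, Measurable (f x))
    (hF : Measurable F) : Measurable (wAux f F D) := by
  have := hD.to_subtype
  exact Measurable.iSup fun p =>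
    (((hf _ p.1.2).sub (hf _ p.2.2)).abs.min (hF.const_mul 2))
end wprops

lemma slln_aux {Θ' : Type*} [MeasurableSpace Θ'] (P : Measure Θ') [IsProbabilityMeasure P]
    {Ω : Type*} [MeasurableSpace Ω] {μ : Measure Ω} [IsProbabilityMeasure μ]
    (X : ℕ → Ω → Θ') (hX_meas : ∀ i, Measurable (X i))
    (hX_indep : iIndepFun X μ)
    (hX_law : ∀ i, Measure.map (X i) μ = P)
    (g : Θ' → ℝ) (hg : Measurable g) (hgint : Integrable g P) :
    ∀ᵐ ω ∂μ, Tendsto (fun n : ℕ => (1 / n : ℝ) * ∑ i ∈ Finset.range n, g (X i ω))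
      atTop (𝓝 (∫ θ, g θ ∂P)) := by
  have hY : Integrable (fun ω => g (X 0 ω)) μ := by
    have h0 : Integrable g (Measure.map (X 0) μ) := by rw [hX_law 0]; exact hgint
    exact (integrable_map_measure hg.aestronglyMeasurable (hX_meas 0).aemeasurable).mp h0
  have hind : Pairwise (Function.onFun (IndepFun · · μ) fun i ω => g (X i ω)) := by
    intro i j hij
    exact (hX_indep.indepFun hij).comp hg hg
  have hid : ∀ i, IdentDistrib (fun ω => g (X i ω)) (fun ω => g (X 0 ω)) μ μ := by
    intro i
    have hXid : IdentDistrib (X i) (X 0) μ μ :=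
      ⟨(hX_meas i).aemeasurable, (hX_meas 0).aemeasurable, by rw [hX_law i, hX_law 0]⟩
    exact hXid.comp hg
  have hint : ∫ ω, g (X 0 ω) ∂μ = ∫ θ, g θ ∂P := by
    rw [← hX_law 0, integral_map (hX_meas 0).aemeasurable hg.aestronglyMeasurable]
  filter_upwards [strong_law_ae_real (fun i ω => g (X i ω)) hY hind hid] with ω hω
  rw [hint] at hω
  convert hω using 2 with n
  rw [one_div, inv_mul_eq_div]


/-- Glivenko–Cantelli, iid case.  If `(h, θ) ↦ f h θ` is continuous in `h` for
`P`-almost all `θ`, `θ ↦ ⨆_{h ∈ H} |f h θ|` is measurable with finite integral, and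
`θ₁, θ₂, …` are iid with law `P`, then `sup_{h ∈ H} |Bₙ(h) − B(h)| → 0` almost surely. -/
theorem stmt1 {d k : ℕ}
    (Θ : Set (EuclideanSpace ℝ (Fin d))) (hΘ : MeasurableSet Θ)
    (P : Measure Θ) [IsProbabilityMeasure P]
    (H : Set (EuclideanSpace ℝ (Fin k))) (hH : IsCompact H)
    (f : EuclideanSpace ℝ (Fin k) → Θ → ℝ)
    (hf_meas : ∀ h ∈ H, Measurable (f h))
    (hf_cont : ∀ᵐ θ ∂P, ContinuousOn (fun h => f h θ) H)
    (hsup_meas : Measurable (fun θ => ⨆ h : H, |f (h : EuclideanSpace ℝ (Fin k)) θ|))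
    (hsup_int : Integrable (fun θ => ⨆ h : H, |f (h : EuclideanSpace ℝ (Fin k)) θ|) P)
    {Ω : Type*} [MeasurableSpace Ω] (μ : Measure Ω) [IsProbabilityMeasure μ]
    (X : ℕ → Ω → Θ) (hX_meas : ∀ i, Measurable (X i))
    (hX_indep : iIndepFun X μ)
    (hX_law : ∀ i, Measure.map (X i) μ = P) :
    ∀ᵐ ω ∂μ, Tendsto (fun n : ℕ =>
        ⨆ h : H, |(1 / n : ℝ) * ∑ i ∈ Finset.range n, f (h : EuclideanSpace ℝ (Fin k)) (X i ω)
          - ∫ θ, f (h : EuclideanSpace ℝ (Fin k)) θ ∂P|)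
      atTop (𝓝 0) := by
  classical
  rcases isEmpty_or_nonempty H with hHe | hHne
  · refine Eventually.of_forall fun ω => ?_
    simp only [Real.iSup_of_isEmpty]
    exact tendsto_const_nhds
  have hHne' : Nonempty ↥H := hHne
  set F : Θ → ℝ := fun θ => ⨆ h : H, |f (h : EuclideanSpace ℝ (Fin k)) θ| with hFdef
  have hFnn : ∀ θ, 0 ≤ F θ := fun θ => Real.iSup_nonneg fun h => abs_nonneg _
  have hFbd : ∀ θ, ContinuousOn (fun x => f x θ) H → ∀ h, h ∈ H → |f h θ| ≤ F θ := by
    intro θ hθ h hh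
    have hc : ContinuousOn (fun x : EuclideanSpace ℝ (Fin k) => |f x θ|) H := hθ.abs
    have hb : BddAbove (Set.range fun h : H => |f (h : EuclideanSpace ℝ (Fin k)) θ|) := by
      have := (hH.image_of_continuousOn hc).bddAbove
      rwa [Set.image_eq_range] at this
    exact le_ciSup hb ⟨h, hh⟩
  have hfint : ∀ h, h ∈ H → Integrable (f h) P := by
    intro h hh
    refine hsup_int.mono' (hf_meas h hh).aestronglyMeasurable ?_
    filter_upwards [hf_cont] with θ hθ
    simpa using hFbd θ hθ h hh
  -- countable dense subsets of the small balls
  have hDex : ∀ (h : H) (m : ℕ), ∃ D : Set (EuclideanSpace ℝ (Fin k)), D.Countable ∧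
      (h : EuclideanSpace ℝ (Fin k)) ∈ D ∧
      D ⊆ H ∩ closedBall (h : EuclideanSpace ℝ (Fin k)) (1 / (m + 1)) ∧
      H ∩ closedBall (h : EuclideanSpace ℝ (Fin k)) (1 / (m + 1)) ⊆ closure D := by
    intro h m
    obtain ⟨t, hts, htc, htd⟩ :=
      (TopologicalSpace.IsSeparable.of_separableSpace
        (H ∩ closedBall (h : EuclideanSpace ℝ (Fin k)) (1 / (m + 1)))).exists_countable_dense_subset
    refine ⟨insert (h : EuclideanSpace ℝ (Fin k)) t, htc.insert _, mem_insert _ _, ?_, ?_⟩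
    · exact insert_subset ⟨h.2, mem_closedBall_self (by positivity)⟩ hts
    · exact htd.trans (closure_mono (subset_insert _ _))
  choose D hDc hDmem hDsub hDdense using hDex
  have hwmeas : ∀ (h : H) (m : ℕ), Measurable (wAux f F (D h m)) := fun h m =>
    wAux_measurable (hDc h m) (fun x hx => hf_meas x ((hDsub h m) hx).1) hsup_meas
  have hwint : ∀ (h : H) (m : ℕ), Integrable (wAux f F (D h m)) P := by
    intro h m
    refine (hsup_int.const_mul 2).mono' (hwmeas h m).aestronglyMeasurable ?_
    refine Eventually.of_forall fun θ => ?_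
    have hne : Nonempty (D h m) := ⟨⟨_, hDmem h m⟩⟩
    rw [Real.norm_eq_abs, abs_of_nonneg (wAux_nonneg (hFnn θ))]
    exact wAux_le θ
  -- key pointwise bound
  have hwkey : ∀ θ, ContinuousOn (fun x => f x θ) H → ∀ (h : H) (m : ℕ),
      ∀ h' ∈ H ∩ closedBall (h : EuclideanSpace ℝ (Fin k)) (1 / (m + 1)),
      |f h' θ - f (h : EuclideanSpace ℝ (Fin k)) θ| ≤ wAux f F (D h m) θ := by
    intro θ hθ h m h' hh'
    have hxD : ∀ x ∈ D h m,
        |f x θ - f (h : EuclideanSpace ℝ (Fin k)) θ| ≤ wAux f F (D h m) θ := by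
      intro x hx
      refine wAux_term_le hx (hDmem h m) ?_
      have h1 := hFbd θ hθ x ((hDsub h m) hx).1
      have h2 := hFbd θ hθ _ h.2
      calc |f x θ - f (h : EuclideanSpace ℝ (Fin k)) θ|
          ≤ |f x θ| + |f (h : EuclideanSpace ℝ (Fin k)) θ| := abs_sub _ _
        _ ≤ 2 * F θ := by linarith
    have hcl : h' ∈ closure (D h m) := hDdense h m hh'
    haveI : (𝓝[D h m] h').NeBot := mem_closure_iff_nhdsWithin_neBot.mp hcl
    have hcont : ContinuousWithinAt
        (fun x => |f x θ - f (h : EuclideanSpace ℝ (Fin k)) θ|) (D h m) h' :=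
      (((hθ h' hh'.1).sub continuousWithinAt_const).abs).mono fun x hx => ((hDsub h m) hx).1
    exact le_of_tendsto hcont (eventually_mem_nhdsWithin.mono hxD)
  -- pointwise convergence of w to 0
  have hwptw : ∀ θ, ContinuousOn (fun x => f x θ) H → ∀ h : H,
      Tendsto (fun m => wAux f F (D h m) θ) atTop (𝓝 0) := by
    intro θ hθ h
    rw [Metric.tendsto_atTop]
    intro ε hε
    have hc := hθ (h : EuclideanSpace ℝ (Fin k)) h.2
    rw [Metric.continuousWithinAt_iff] at hc
    obtain ⟨δ, hδ, hδ'⟩ := hc (ε / 3) (by positivity)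
    obtain ⟨N, hN⟩ := exists_nat_one_div_lt (by positivity : (0:ℝ) < δ)
    refine ⟨N, fun m hm => ?_⟩
    have hterm : ∀ x ∈ D h m, |f x θ - f (h : EuclideanSpace ℝ (Fin k)) θ| < ε / 3 := by
      intro x hx
      have hxm := (hDsub h m) hx
      have h1 : dist x (h : EuclideanSpace ℝ (Fin k)) < δ := by
        have h2 := mem_closedBall.mp hxm.2
        have h3 : (1:ℝ) / (m + 1) ≤ 1 / (N + 1) := by
          apply one_div_le_one_div_of_le (by positivity)
          have : (N:ℝ) ≤ m := Nat.cast_le.mpr hm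
          linarith
        linarith
      have := hδ' hxm.1 h1
      rwa [Real.dist_eq] at this
    have hwle : wAux f F (D h m) θ ≤ ε / 3 + ε / 3 := by
      have hne : Nonempty ((D h m) × (D h m)) := ⟨⟨⟨_, hDmem h m⟩, ⟨_, hDmem h m⟩⟩⟩
      refine ciSup_le fun p => (min_le_left _ _).trans ?_
      calc |f p.1 θ - f p.2 θ|
          ≤ |f p.1 θ - f (h : EuclideanSpace ℝ (Fin k)) θ|
            + |f (h : EuclideanSpace ℝ (Fin k)) θ - f p.2 θ| := abs_sub_le _ _ _
        _ ≤ ε / 3 + ε / 3 := by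
            have t1 := hterm _ p.1.2
            have t2 := hterm _ p.2.2
            rw [abs_sub_comm] at t2
            exact add_le_add t1.le t2.le
    rw [Real.dist_eq, sub_zero, abs_of_nonneg (wAux_nonneg (hFnn θ))]
    linarith
  -- convergence of integrals of w to 0
  have hwInt0 : ∀ h : H, Tendsto (fun m => ∫ θ, wAux f F (D h m) θ ∂P) atTop (𝓝 0) := by
    intro h
    have hlim : ∀ᵐ θ ∂P, Tendsto (fun m => wAux f F (D h m) θ) atTop (𝓝 0) := by
      filter_upwards [hf_cont] with θ hθ using hwptw θ hθ h
    have hbd : ∀ m : ℕ, ∀ᵐ θ ∂P, ‖wAux f F (D h m) θ‖ ≤ 2 * F θ := by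
      intro m
      refine Eventually.of_forall fun θ => ?_
      have hne : Nonempty (D h m) := ⟨⟨_, hDmem h m⟩⟩
      rw [Real.norm_eq_abs, abs_of_nonneg (wAux_nonneg (hFnn θ))]
      exact wAux_le θ
    have := tendsto_integral_of_dominated_convergence (fun θ => 2 * F θ)
      (fun m => (hwmeas h m).aestronglyMeasurable) (hsup_int.const_mul 2) hbd hlim
    simpa using this
  -- the ε-argument
  have key : ∀ ε : ℝ, 0 < ε → ∀ᵐ ω ∂μ, ∀ᶠ (n : ℕ) in atTop,
      (⨆ h : H, |(1 / n : ℝ) * ∑ i ∈ Finset.range n, f (h : EuclideanSpace ℝ (Fin k)) (X i ω)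
        - ∫ θ, f (h : EuclideanSpace ℝ (Fin k)) θ ∂P|) < ε := by
    intro ε hε
    have hmmex : ∀ h : H, ∃ m : ℕ, ∫ θ, wAux f F (D h m) θ ∂P < ε / 8 := fun h =>
      ((hwInt0 h).eventually (gt_mem_nhds (by positivity : (0:ℝ) < ε / 8))).exists
    choose mm hmm8 using hmmex
    have hcov : H ⊆ ⋃ h : H, ball (h : EuclideanSpace ℝ (Fin k)) (1 / (mm h + 1)) := by
      intro x hx
      exact mem_iUnion.mpr ⟨⟨x, hx⟩, mem_ball_self (by positivity)⟩
    obtain ⟨t, ht⟩ := hH.elim_finite_subcover _ (fun h : H => isOpen_ball) hcov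
    have hE1 : ∀ᵐ ω ∂μ, ∀ j ∈ t, Tendsto (fun n : ℕ =>
        (1 / n : ℝ) * ∑ i ∈ Finset.range n, f (j : EuclideanSpace ℝ (Fin k)) (X i ω)) atTop
        (𝓝 (∫ θ, f (j : EuclideanSpace ℝ (Fin k)) θ ∂P)) :=
      (ae_ball_iff t.countable_toSet).mpr fun j _ =>
        slln_aux P X hX_meas hX_indep hX_law _ (hf_meas _ j.2) (hfint _ j.2)
    have hE2 : ∀ᵐ ω ∂μ, ∀ j ∈ t, Tendsto (fun n : ℕ =>
        (1 / n : ℝ) * ∑ i ∈ Finset.range n, wAux f F (D j (mm j)) (X i ω)) atTop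
        (𝓝 (∫ θ, wAux f F (D j (mm j)) θ ∂P)) :=
      (ae_ball_iff t.countable_toSet).mpr fun j _ =>
        slln_aux P X hX_meas hX_indep hX_law _ (hwmeas j (mm j)) (hwint j (mm j))
    have hE3 : ∀ᵐ ω ∂μ, ∀ i : ℕ, ContinuousOn (fun x => f x (X i ω)) H :=
      ae_all_iff.mpr fun i =>
        ae_of_ae_map (hX_meas i).aemeasurable (by rw [hX_law i]; exact hf_cont)
    filter_upwards [hE1, hE2, hE3] with ω hω1 hω2 hω3
    have hev1 : ∀ᶠ (n : ℕ) in atTop, ∀ j ∈ t,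
        |(1 / n : ℝ) * ∑ i ∈ Finset.range n, f (j : EuclideanSpace ℝ (Fin k)) (X i ω)
          - ∫ θ, f (j : EuclideanSpace ℝ (Fin k)) θ ∂P| < ε / 4 := by
      rw [eventually_all_finset]
      intro j hj
      filter_upwards [(hω1 j hj).eventually
        (Metric.ball_mem_nhds _ (by positivity : (0:ℝ) < ε / 4))] with n hn
      rwa [Real.dist_eq] at hn
    have hev2 : ∀ᶠ (n : ℕ) in atTop, ∀ j ∈ t,
        (1 / n : ℝ) * ∑ i ∈ Finset.range n, wAux f F (D j (mm j)) (X i ω) < ε / 4 := by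
      rw [eventually_all_finset]
      intro j hj
      exact (hω2 j hj).eventually (gt_mem_nhds (lt_trans (hmm8 j) (by linarith)))
    filter_upwards [hev1, hev2] with n hn1 hn2
    have hsup : ∀ h : H,
        |(1 / n : ℝ) * ∑ i ∈ Finset.range n, f (h : EuclideanSpace ℝ (Fin k)) (X i ω)
          - ∫ θ, f (h : EuclideanSpace ℝ (Fin k)) θ ∂P| ≤ ε / 4 + ε / 4 + ε / 8 := by
      intro h
      obtain ⟨j, hjt, hjball⟩ := mem_iUnion₂.mp (ht h.2)
      have hhcb : (h : EuclideanSpace ℝ (Fin k)) ∈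
          H ∩ closedBall (j : EuclideanSpace ℝ (Fin k)) (1 / (mm j + 1)) :=
        ⟨h.2, ball_subset_closedBall hjball⟩
      set Bnh := (1 / n : ℝ) * ∑ i ∈ Finset.range n, f (h : EuclideanSpace ℝ (Fin k)) (X i ω)
      set Bnj := (1 / n : ℝ) * ∑ i ∈ Finset.range n, f (j : EuclideanSpace ℝ (Fin k)) (X i ω)
      set Bh := ∫ θ, f (h : EuclideanSpace ℝ (Fin k)) θ ∂P
      set Bj := ∫ θ, f (j : EuclideanSpace ℝ (Fin k)) θ ∂P
      have hA : |Bnh - Bnj| ≤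
          (1 / n : ℝ) * ∑ i ∈ Finset.range n, wAux f F (D j (mm j)) (X i ω) := by
        rw [show Bnh - Bnj = (1 / n : ℝ) * (∑ i ∈ Finset.range n,
            (f (h : EuclideanSpace ℝ (Fin k)) (X i ω) - f (j : EuclideanSpace ℝ (Fin k)) (X i ω)))
          by rw [Finset.sum_sub_distrib, mul_sub]]
        rw [abs_mul, abs_of_nonneg (by positivity : (0:ℝ) ≤ 1 / n)]
        refine mul_le_mul_of_nonneg_left ?_ (by positivity)
        refine (Finset.abs_sum_le_sum_abs _ _).trans (Finset.sum_le_sum fun i _ => ?_)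
        exact hwkey (X i ω) (hω3 i) j (mm j) _ hhcb
      have hC : |Bj - Bh| ≤ ε / 8 := by
        have heq : Bj - Bh = ∫ θ, (f (j : EuclideanSpace ℝ (Fin k)) θ
            - f (h : EuclideanSpace ℝ (Fin k)) θ) ∂P :=
          (integral_sub (hfint _ j.2) (hfint _ h.2)).symm
        rw [heq]
        have habs : |∫ θ, (f (j : EuclideanSpace ℝ (Fin k)) θ
            - f (h : EuclideanSpace ℝ (Fin k)) θ) ∂P| ≤ ∫ θ, |f (j : EuclideanSpace ℝ (Fin k)) θ
            - f (h : EuclideanSpace ℝ (Fin k)) θ| ∂P := by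
          simpa [Real.norm_eq_abs] using norm_integral_le_integral_norm (μ := P)
            (f := fun θ => f (j : EuclideanSpace ℝ (Fin k)) θ - f (h : EuclideanSpace ℝ (Fin k)) θ)
        refine habs.trans ?_
        have hmono : ∫ θ, |f (j : EuclideanSpace ℝ (Fin k)) θ
            - f (h : EuclideanSpace ℝ (Fin k)) θ| ∂P ≤ ∫ θ, wAux f F (D j (mm j)) θ ∂P := by
          refine integral_mono_ae ((hfint _ j.2).sub (hfint _ h.2)).abs (hwint j (mm j)) ?_
          filter_upwards [hf_cont] with θ hθ
          rw [abs_sub_comm]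
          exact hwkey θ hθ j (mm j) _ hhcb
        linarith [hmm8 j]
      calc |Bnh - Bh| ≤ |Bnh - Bnj| + |Bnj - Bj| + |Bj - Bh| := by
            have := abs_sub_le Bnh Bnj Bh
            have := abs_sub_le Bnj Bj Bh
            linarith [abs_sub_le Bnh Bnj Bh, abs_sub_le Bnj Bj Bh]
        _ ≤ ε / 4 + ε / 4 + ε / 8 := by
            have h1 := hA.trans (hn2 j hjt).le
            have h2 := (hn1 j hjt).le
            linarith [hC]
    calc (⨆ h : H, |(1 / n : ℝ) * ∑ i ∈ Finset.range n,
            f (h : EuclideanSpace ℝ (Fin k)) (X i ω)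
          - ∫ θ, f (h : EuclideanSpace ℝ (Fin k)) θ ∂P|) ≤ ε / 4 + ε / 4 + ε / 8 :=
          ciSup_le hsup
      _ < ε := by linarith
  have hkeyN : ∀ᵐ ω ∂μ, ∀ m : ℕ, ∀ᶠ (n : ℕ) in atTop,
      (⨆ h : H, |(1 / n : ℝ) * ∑ i ∈ Finset.range n, f (h : EuclideanSpace ℝ (Fin k)) (X i ω)
        - ∫ θ, f (h : EuclideanSpace ℝ (Fin k)) θ ∂P|) < 1 / (m + 1) :=
    ae_all_iff.mpr fun m => key _ (by positivity)
  filter_upwards [hkeyN] with ω hω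
  rw [tendsto_order]
  constructor
  · intro a ha
    exact Eventually.of_forall fun n =>
      lt_of_lt_of_le ha (Real.iSup_nonneg fun h => abs_nonneg _)
  · intro a ha
    obtain ⟨m, hm⟩ := exists_nat_one_div_lt ha
    exact (hω m).mono fun n hn => hn.trans hm
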